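/- Let r ≥ 1 and let t ≥ 1 be an integer with 2^t ≥ r. Set α_j := 2^{j+t} − j + 1 for 1 ≤ j ≤ r. Then the determinant of the r × r matrix whose (i,m) entry, for 1 ≤ i ≤ r and 0 ≤ m ≤ r−1, is 2^{α_i+m}(B_{α_i+m}(1/2) − B_{α_i+m})/(α_i+m), is a nonzero rational number whose 2-adic valuation equals −∑_{j=1}^{r}(t+j) = −rt − r(r+1)/2. -/

import Mathlib

open Finset


lemma bern_eval_two (N : ℕ) :
    (Polynomial.bernoulli N).eval (2 : ℚ) =
      ∑ i ∈ range (N + 1), (N.choose i : ℚ) * bernoulli i * 2 ^ (N - i) := by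
  rw [Polynomial.bernoulli, Polynomial.eval_finset_sum]
  refine sum_congr rfl fun i _ => ?_
  rw [Polynomial.eval_monomial]
  ring

lemma sum_bern_two (n : ℕ) (hn : 1 ≤ n) :
    ∑ i ∈ range (n + 1), ((n + 1).choose i : ℚ) * bernoulli i * 2 ^ (n + 1 - i)
      = (n : ℚ) + 1 := by
  have h2 : (Polynomial.bernoulli (n+1)).eval (2 : ℚ) = bernoulli (n+1) + (n+1) := by
    have := Polynomial.bernoulli_eval_one_add (n+1) 1
    rw [Polynomial.bernoulli_eval_one, one_pow] at this
    rw [show (1:ℚ) + 1 = 2 by norm_num] at this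
    rw [this, ← bernoulli_eq_bernoulli'_of_ne_one (show n+1 ≠ 1 by omega)]
    push_cast
    ring
  have h3 := bern_eval_two (n+1)
  rw [sum_range_succ] at h3
  simp only [Nat.choose_self, Nat.cast_one, Nat.sub_self, pow_zero] at h3
  have := h2.symm.trans h3
  push_cast at this ⊢
  linarith

lemma sum_g (n : ℕ) (hn : 1 ≤ n) :
    ∑ k ∈ range (n + 1), ((n + 1).choose k : ℚ) * ((2 * (1/2)^k - 1) * bernoulli k)
      = ((n : ℚ) + 1) * (1/2)^n := by
  have split : ∀ k ∈ range (n + 1),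
      ((n + 1).choose k : ℚ) * ((2 * (1/2)^k - 1) * bernoulli k)
        = (1/2)^n * (((n + 1).choose k : ℚ) * bernoulli k * 2 ^ (n + 1 - k))
          - ((n + 1).choose k : ℚ) * bernoulli k := by
    intro k hk
    rw [mem_range] at hk
    have hp : (2:ℚ) ^ (n + 1 - k) = 2 ^ (n+1) / 2 ^ k := pow_sub₀ _ two_ne_zero (by omega)
    rw [hp]
    have h2k : (2:ℚ)^k ≠ 0 := pow_ne_zero _ two_ne_zero
    have h2n : (2:ℚ)^n ≠ 0 := pow_ne_zero _ two_ne_zero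
    have hk' : (1/2:ℚ)^k * 2^k = 1 := by rw [← mul_pow]; norm_num
    have hn' : (1/2:ℚ)^n * 2^n = 1 := by rw [← mul_pow]; norm_num
    field_simp
    linear_combination (((n + 1).choose k : ℚ) * bernoulli k * 2) * (hk' - hn')
  rw [sum_congr rfl split, sum_sub_distrib, ← mul_sum, sum_bern_two n hn,
    _root_.sum_bernoulli]
  simp only [show n + 1 ≠ 1 by omega, if_false]
  ring

lemma bern_eval_half (n : ℕ) :
    (Polynomial.bernoulli n).eval (1/2 : ℚ) = (2 * (1/2:ℚ)^n - 1) * bernoulli n := by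
  induction n using Nat.strong_induction_on with
  | _ n ih =>
    rcases Nat.eq_zero_or_pos n with rfl | hn
    · norm_num
    · have hsum := congrArg (Polynomial.eval (1/2 : ℚ)) (Polynomial.sum_bernoulli n)
      rw [Polynomial.eval_finset_sum, Polynomial.eval_monomial] at hsum
      simp only [Polynomial.eval_smul, smul_eq_mul] at hsum
      have hg := sum_g n hn
      rw [sum_range_succ] at hsum hg
      have heq : ∑ k ∈ range n, ((n + 1).choose k : ℚ) * (Polynomial.bernoulli k).eval (1/2)
          = ∑ k ∈ range n, ((n + 1).choose k : ℚ) * ((2 * (1/2)^k - 1) * bernoulli k) := by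
        refine sum_congr rfl fun k hk => ?_
        rw [mem_range] at hk
        rw [ih k hk]
      rw [heq] at hsum
      have hC : (((n + 1).choose n : ℕ) : ℚ) ≠ 0 :=
        Nat.cast_ne_zero.mpr (Nat.choose_pos (Nat.le_succ n)).ne'
      have hmul : (((n + 1).choose n : ℕ) : ℚ) * (Polynomial.bernoulli n).eval (1/2)
          = (((n + 1).choose n : ℕ) : ℚ) * ((2 * (1/2:ℚ)^n - 1) * bernoulli n) := by
        linarith
      exact mul_left_cancel₀ hC hmul

/-- Genocchi numbers as rationals. -/
noncomputable def Gen (n : ℕ) : ℚ := 2 * (1 - 2 ^ n) * bernoulli n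

lemma gen_one : Gen 1 = 1 := by norm_num [Gen]

lemma gen_zero : Gen 0 = 0 := by norm_num [Gen]

lemma gen_odd_eq_zero {n : ℕ} (h : Odd n) (h1 : 1 < n) : Gen n = 0 := by
  rw [Gen, bernoulli_eq_bernoulli'_of_ne_one (by omega), bernoulli'_eq_zero_of_odd h h1, mul_zero]

/-- Lemma E : Genocchi recurrence. -/
lemma gen_rec (n : ℕ) (hn : 1 ≤ n) :
    ∑ k ∈ range (n + 1), ((n + 1).choose k : ℚ) * Gen k * 2 ^ (n + 1 - k)
      = 2 * ((n : ℚ) + 1) := by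
  have split : ∀ k ∈ range (n + 1),
      ((n + 1).choose k : ℚ) * Gen k * 2 ^ (n + 1 - k)
        = 2 * (((n + 1).choose k : ℚ) * bernoulli k * 2 ^ (n + 1 - k))
          - 2 ^ (n + 2) * (((n + 1).choose k : ℚ) * bernoulli k) := by
    intro k hk
    rw [mem_range] at hk
    have hp : (2:ℚ) ^ (k+1) * 2 ^ (n + 1 - k) = 2 ^ (n + 2) := by
      rw [← pow_add]
      congr 1
      omega
    rw [Gen]
    calc ((n + 1).choose k : ℚ) * (2 * (1 - 2 ^ k) * bernoulli k) * 2 ^ (n + 1 - k)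
        = 2 * (((n + 1).choose k : ℚ) * bernoulli k * 2 ^ (n + 1 - k))
          - ((2:ℚ) ^ (k+1) * 2 ^ (n + 1 - k)) * (((n + 1).choose k : ℚ) * bernoulli k) := by
          ring
      _ = _ := by rw [hp]
  rw [sum_congr rfl split, sum_sub_distrib, ← mul_sum, ← mul_sum, sum_bern_two n hn,
    _root_.sum_bernoulli]
  simp only [show n + 1 ≠ 1 by omega, if_false]
  ring

lemma padic_norm_add_eq_left {p : ℕ} [Fact p.Prime] {a b : ℚ_[p]} (h : ‖b‖ < ‖a‖) :
    ‖a + b‖ = ‖a‖ := by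
  rw [Padic.add_eq_max_of_ne (ne_of_gt h)]
  exact max_eq_left h.le

lemma norm_two : ‖(2 : ℚ_[2])‖ = 1/2 := by
  have := @Padic.norm_p 2 ⟨Nat.prime_two⟩
  norm_num at this
  exact_mod_cast this

lemma norm_two_pow (j : ℕ) : ‖(2 : ℚ_[2]) ^ j‖ = (1/2 : ℝ) ^ j := by
  rw [norm_pow, norm_two]

lemma norm_odd_nat (m : ℕ) (h : ¬ 2 ∣ m) : ‖(m : ℚ_[2])‖ = 1 := by
  have h1 : ‖((m : ℤ) : ℚ_[2])‖ ≤ 1 := Padic.norm_int_le_one _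
  have h2 : ¬ ‖((m : ℤ) : ℚ_[2])‖ < 1 := by
    rw [Padic.norm_intCast_lt_one_iff]
    exact_mod_cast h
  push_cast at h1 h2
  linarith

lemma gen_norm_le_one (ih : ∀ m, Even m → 2 ≤ m → ‖((Gen m : ℚ) : ℚ_[2])‖ = 1) :
    True := trivial

lemma gen_norm : ∀ n : ℕ, Even n → 2 ≤ n → ‖((Gen n : ℚ) : ℚ_[2])‖ = 1 := by
  intro n
  induction n using Nat.strong_induction_on with
  | _ n ih =>
    intro hev hn
    -- cast the recurrence to ℚ_[2]
    have h0 := congrArg (fun q : ℚ => (q : ℚ_[2])) (gen_rec n (by omega))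
    push_cast at h0
    -- h0 : ∑ k ∈ range (n+1), (((n+1).choose k : ℚ_[2])) * ((Gen k : ℚ) : ℚ_[2]) * 2^(n+1-k)
    --        = 2 * ((n : ℚ_[2]) + 1)
    rw [sum_range_succ] at h0
    have h1mem : (1 : ℕ) ∈ range n := by simp; omega
    rw [← Finset.add_sum_erase _ _ h1mem] at h0
    set R := ∑ k ∈ (range n).erase 1,
      ((((n+1).choose k : ℕ) : ℚ_[2])) * ((Gen k : ℚ) : ℚ_[2]) * 2 ^ (n + 1 - k) with hR
    rw [Nat.choose_one_right, Nat.choose_succ_self_right, gen_one,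
      show n + 1 - 1 = n from rfl, show n + 1 - n = 1 by omega] at h0
    push_cast at h0
    set X : ℚ_[2] := ((Gen n : ℚ) : ℚ_[2]) with hX
    have key : ((n : ℚ_[2]) + 1) * X * 2
        = (((n : ℚ_[2]) + 1) * (2 - 2 ^ n)) + (-R) := by
      rw [pow_one] at h0
      linear_combination h0
    have hodd : ¬ (2 ∣ (n + 1)) := by
      rcases hev with ⟨c, hc⟩
      omega
    have hn1 : ‖((n : ℚ_[2]) + 1)‖ = 1 := by
      have := norm_odd_nat (n + 1) hodd
      push_cast at this
      exact this
    have h2n : ‖(2 : ℚ_[2]) ^ n‖ < ‖(2 : ℚ_[2])‖ := by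
      rw [norm_two_pow, norm_two]
      calc ((1:ℝ)/2) ^ n ≤ (1/2) ^ 2 := by
            apply pow_le_pow_of_le_one (by norm_num) (by norm_num) hn
        _ < 1/2 := by norm_num
    have hA : ‖((n : ℚ_[2]) + 1) * (2 - 2 ^ n)‖ = 1/2 := by
      rw [norm_mul, hn1, one_mul, sub_eq_add_neg, padic_norm_add_eq_left (by
        rwa [norm_neg]), norm_two]
    have hRb : ‖R‖ ≤ 1/4 := by
      rw [hR]
      apply IsUltrametricDist.norm_sum_le_of_forall_le_of_nonneg (by norm_num)
      intro k hk
      rw [Finset.mem_erase, Finset.mem_range] at hk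
      obtain ⟨hk1, hkn⟩ := hk
      have hGk : ‖((Gen k : ℚ) : ℚ_[2])‖ ≤ 1 := by
        rcases Nat.even_or_odd k with hke | hko
        · rcases Nat.eq_zero_or_pos k with rfl | hkp
          · simp [gen_zero]
          · have : 2 ≤ k := by
              rcases hke with ⟨c, hc⟩
              omega
            exact (ih k hkn hke this).le
        · rcases Nat.eq_zero_or_pos k with rfl | hkp
          · simp [gen_zero]
          · rw [gen_odd_eq_zero hko (by omega)]
            simp
      have hC : ‖(((n + 1).choose k : ℕ) : ℚ_[2])‖ ≤ 1 := by
        have := Padic.norm_int_le_one (p := 2) (((n + 1).choose k : ℕ) : ℤ)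
        push_cast at this
        exact this
      calc ‖(((n + 1).choose k : ℕ) : ℚ_[2]) * ((Gen k : ℚ) : ℚ_[2]) * 2 ^ (n + 1 - k)‖
          = ‖(((n + 1).choose k : ℕ) : ℚ_[2])‖ * ‖((Gen k : ℚ) : ℚ_[2])‖ *
              ‖(2 : ℚ_[2]) ^ (n + 1 - k)‖ := by rw [norm_mul, norm_mul]
        _ ≤ 1 * 1 * (1/2) ^ (n + 1 - k) := by
            rw [norm_two_pow]
            gcongr
        _ ≤ 1 * 1 * (1/2) ^ 2 := by
            have h : ((1:ℝ)/2) ^ (n + 1 - k) ≤ (1/2) ^ 2 :=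
              pow_le_pow_of_le_one (by norm_num) (by norm_num) (by omega)
            simpa using h
        _ = 1/4 := by norm_num
    have hLHS : ‖((n : ℚ_[2]) + 1) * X * 2‖ = 1/2 := by
      rw [key, padic_norm_add_eq_left (by rw [norm_neg, hA]; linarith), hA]
    rw [norm_mul, norm_mul, hn1, one_mul, norm_two] at hLHS
    have : ‖X‖ * (1/2) = 1/2 := hLHS
    linarith

lemma entry_eq (n : ℕ) :
    (2:ℚ)^n * ((Polynomial.bernoulli n).eval (1/2:ℚ) - bernoulli n) / (n:ℚ)
      = Gen n / n := by
  rw [bern_eval_half, Gen]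
  congr 1
  have h : (2:ℚ)^n * (1/2:ℚ)^n = 1 := by
    rw [← mul_pow]
    norm_num
  linear_combination (2 * bernoulli n) * h

lemma norm_int_ge (t : ℕ) (z : ℤ) (hz : z ≠ 0) (hlt : z.natAbs < 2 ^ t) :
    (2:ℝ) ^ (-(t:ℤ) + 1) ≤ ‖(z : ℚ_[2])‖ := by
  have hz2 : ((z : ℚ_[2])) ≠ 0 := by exact_mod_cast hz
  have hnd : ¬ ((2:ℤ) ^ t ∣ z) := by
    intro hd
    have h1 : (2:ℤ) ^ t ≤ |z| := Int.le_of_dvd (abs_pos.mpr hz) ((dvd_abs _ _).mpr hd)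
    rw [Int.abs_eq_natAbs] at h1
    have : (2:ℤ)^t = ((2^t : ℕ) : ℤ) := by push_cast; ring
    omega
  have hgt : ¬ (‖(z : ℚ_[2])‖ ≤ ((2:ℕ) : ℝ) ^ (-(t:ℤ))) := by
    rw [Padic.norm_int_le_pow_iff_dvd]
    exact_mod_cast hnd
  push_neg at hgt
  have hnv := Padic.norm_eq_zpow_neg_valuation hz2
  rw [hnv] at hgt ⊢
  have h12 : (1:ℝ) < ((2:ℕ):ℝ) := by norm_num
  have hlt2 : (-(t:ℤ)) < -(z : ℚ_[2]).valuation := (zpow_lt_zpow_iff_right₀ h12).mp hgt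
  have : (-(t:ℤ) + 1) ≤ -(z : ℚ_[2]).valuation := by omega
  calc (2:ℝ) ^ (-(t:ℤ) + 1) = ((2:ℕ):ℝ) ^ (-(t:ℤ) + 1) := by norm_num
    _ ≤ ((2:ℕ):ℝ) ^ (-(z : ℚ_[2]).valuation) := (zpow_le_zpow_iff_right₀ h12).mpr this

/-- Let `r ≥ 1` and `t ≥ 1` with `2^t ≥ r`. Set `α_i := 2^{(i+1)+t} − (i+1) + 1` for
`0 ≤ i ≤ r−1`. Then the determinant of the `r × r` matrix with `(i,m)` entry
`2^{α_i+m}(B_{α_i+m}(1/2) − B_{α_i+m})/(α_i+m)` is a nonzero rational number whose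
2-adic valuation equals `−rt − r(r+1)/2`. -/
theorem det_two_adic_valuation (r t : ℕ) (hr : 1 ≤ r) (ht : 1 ≤ t) (h2t : r ≤ 2 ^ t) :
    Matrix.det (Matrix.of fun i m : Fin r =>
      (2 : ℚ) ^ (2 ^ (i.val + 1 + t) - (i.val + 1) + 1 + m.val) *
        ((Polynomial.bernoulli (2 ^ (i.val + 1 + t) - (i.val + 1) + 1 + m.val)).eval
            (1 / 2 : ℚ) -
          bernoulli (2 ^ (i.val + 1 + t) - (i.val + 1) + 1 + m.val)) /
        ((2 ^ (i.val + 1 + t) - (i.val + 1) + 1 + m.val : ℕ) : ℚ)) ≠ 0 ∧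
    padicValRat 2
      (Matrix.det (Matrix.of fun i m : Fin r =>
        (2 : ℚ) ^ (2 ^ (i.val + 1 + t) - (i.val + 1) + 1 + m.val) *
          ((Polynomial.bernoulli (2 ^ (i.val + 1 + t) - (i.val + 1) + 1 + m.val)).eval
              (1 / 2 : ℚ) -
            bernoulli (2 ^ (i.val + 1 + t) - (i.val + 1) + 1 + m.val)) /
          ((2 ^ (i.val + 1 + t) - (i.val + 1) + 1 + m.val : ℕ) : ℚ))) =
      -((r : ℤ) * t + (r : ℤ) * (r + 1) / 2) := by
  haveI : Fact (Nat.Prime 2) := ⟨Nat.prime_two⟩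
  set N : Fin r → Fin r → ℕ :=
    fun i m => 2 ^ (i.val + 1 + t) - (i.val + 1) + 1 + m.val with hN
  set M : Matrix (Fin r) (Fin r) ℚ :=
    Matrix.of (fun i m => Gen (N i m) / (N i m)) with hM
  have hMeq : (Matrix.of fun i m : Fin r =>
      (2 : ℚ) ^ (2 ^ (i.val + 1 + t) - (i.val + 1) + 1 + m.val) *
        ((Polynomial.bernoulli (2 ^ (i.val + 1 + t) - (i.val + 1) + 1 + m.val)).eval
            (1 / 2 : ℚ) -
          bernoulli (2 ^ (i.val + 1 + t) - (i.val + 1) + 1 + m.val)) /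
        ((2 ^ (i.val + 1 + t) - (i.val + 1) + 1 + m.val : ℕ) : ℚ)) = M := by
    ext i m
    exact entry_eq (N i m)
  rw [hMeq]
  -- basic facts about N
  have hpow_ge : ∀ i : Fin r, i.val + 4 ≤ 2 ^ (i.val + 1 + t) := by
    intro i
    have h1 : i.val < 2 ^ i.val := Nat.lt_two_pow_self
    have h2 : 2 ^ (i.val + 2) ≤ 2 ^ (i.val + 1 + t) :=
      Nat.pow_le_pow_right (by norm_num) (by omega)
    have h3 : 2 ^ (i.val + 2) = 4 * 2 ^ i.val := by ring
    omega
  have hNval : ∀ i m : Fin r, (N i m : ℤ) = 2 ^ (i.val + 1 + t) + ((m.val : ℤ) - i.val) := by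
    intro i m
    have := hpow_ge i
    have hle : (i.val + 1 : ℕ) ≤ 2 ^ (i.val + 1 + t) := by omega
    have : ((2 ^ (i.val + 1 + t) : ℕ) : ℤ) = 2 ^ (i.val + 1 + t) := by push_cast; ring
    simp only [hN]
    omega
  have hN4 : ∀ i m : Fin r, 4 ≤ N i m := by
    intro i m
    have := hpow_ge i
    simp only [hN]
    omega
  have hNdiag : ∀ i : Fin r, N i i = 2 ^ (i.val + 1 + t) := by
    intro i
    have := hpow_ge i
    simp only [hN]
    omega
  have hNpar : ∀ i m : Fin r, N i m % 2 = (i.val + m.val) % 2 := by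
    intro i m
    have h2 : 2 ^ (i.val + 1 + t) = 2 * 2 ^ (i.val + t) := by ring
    have := hpow_ge i
    simp only [hN]
    omega
  -- diagonal entry norms
  have hdiag : ∀ i : Fin r, ‖((M i i : ℚ) : ℚ_[2])‖ = (2:ℝ) ^ (i.val + 1 + t) := by
    intro i
    have hG : ‖((Gen (N i i) : ℚ) : ℚ_[2])‖ = 1 := by
      apply gen_norm
      · rw [Nat.even_iff, hNpar i i]
        omega
      · have := hN4 i i; omega
    have hcast : ((M i i : ℚ) : ℚ_[2])
        = ((Gen (N i i) : ℚ) : ℚ_[2]) / ((N i i : ℕ) : ℚ_[2]) := by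
      simp only [hM, Matrix.of_apply]
      push_cast
      ring
    have hNn : ((N i i : ℕ) : ℚ_[2]) = (2 : ℚ_[2]) ^ (i.val + 1 + t) := by
      rw [hNdiag i]
      push_cast
      ring
    rw [hcast, norm_div, hG, hNn, norm_two_pow]
    rw [div_pow, one_pow, one_div, one_div, inv_inv]
  -- off-diagonal entry norms
  have hoff : ∀ i m : Fin r, m ≠ i → ‖((M i m : ℚ) : ℚ_[2])‖ ≤ (2:ℝ) ^ ((t:ℤ) - 1) := by
    intro i m hmi
    by_cases hpar : (i.val + m.val) % 2 = 0
    · -- even case : entry is Gen N / N with ‖Gen N‖ = 1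
      have hNe : N i m % 2 = 0 := by rw [hNpar]; exact hpar
      have hG : ‖((Gen (N i m) : ℚ) : ℚ_[2])‖ = 1 := by
        apply gen_norm
        · exact Nat.even_iff.mpr hNe
        · have := hN4 i m; omega
      have hcast : ((M i m : ℚ) : ℚ_[2])
          = ((Gen (N i m) : ℚ) : ℚ_[2]) / ((N i m : ℕ) : ℚ_[2]) := by
        simp only [hM, Matrix.of_apply]
        push_cast
        ring
      -- lower bound on ‖N‖
      set z : ℤ := (m.val : ℤ) - i.val with hz
      have hzne : z ≠ 0 := by
        simp only [hz, sub_ne_zero]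
        exact_mod_cast fun h => hmi (Fin.ext h)
      have hzlt : z.natAbs < 2 ^ t := by
        have h1 : m.val < r := m.isLt
        have h2 : i.val < r := i.isLt
        omega
      have hzn : (2:ℝ) ^ (-(t:ℤ) + 1) ≤ ‖(z : ℚ_[2])‖ := norm_int_ge t z hzne hzlt
      have hNcast : ((N i m : ℕ) : ℚ_[2]) = (z : ℚ_[2]) + (2 : ℚ_[2]) ^ (i.val + 1 + t) := by
        have h1 := hNval i m
        have : ((N i m : ℕ) : ℤ) = z + 2 ^ (i.val + 1 + t) := by rw [h1]; ring
        calc ((N i m : ℕ) : ℚ_[2]) = (((N i m : ℕ) : ℤ) : ℚ_[2]) := by push_cast; ring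
          _ = ((z + 2 ^ (i.val + 1 + t) : ℤ) : ℚ_[2]) := by rw [this]
          _ = (z : ℚ_[2]) + (2 : ℚ_[2]) ^ (i.val + 1 + t) := by push_cast; ring
      have hpowlt : ‖(2 : ℚ_[2]) ^ (i.val + 1 + t)‖ < ‖(z : ℚ_[2])‖ := by
        rw [norm_two_pow]
        calc ((1:ℝ)/2) ^ (i.val + 1 + t) ≤ (1/2) ^ (t + 1) := by
              apply pow_le_pow_of_le_one (by norm_num) (by norm_num) (by omega)
          _ = (2:ℝ) ^ (-((t:ℤ) + 1)) := by
              rw [div_pow, one_pow, one_div, ← zpow_natCast, ← zpow_neg]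
              norm_num
          _ < (2:ℝ) ^ (-(t:ℤ) + 1) := by
              apply (zpow_lt_zpow_iff_right₀ (by norm_num : (1:ℝ) < 2)).mpr
              omega
          _ ≤ ‖(z : ℚ_[2])‖ := hzn
      have hNnorm : ‖((N i m : ℕ) : ℚ_[2])‖ = ‖(z : ℚ_[2])‖ := by
        rw [hNcast, padic_norm_add_eq_left hpowlt]
      rw [hcast, norm_div, hG, hNnorm]
      rw [show ((2:ℝ) ^ ((t:ℤ) - 1)) = ((2:ℝ) ^ (-(t:ℤ) + 1))⁻¹ by
        rw [← zpow_neg]; congr 1; ring]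
      rw [one_div]
      apply inv_anti₀ (by positivity) hzn
    · -- odd case : entry is zero
      have hNo : N i m % 2 = 1 := by rw [hNpar]; omega
      have hGz : Gen (N i m) = 0 := by
        apply gen_odd_eq_zero
        · exact Nat.odd_iff.mpr hNo
        · have := hN4 i m; omega
      have : (M i m : ℚ) = 0 := by
        simp only [hM, Matrix.of_apply, hGz, zero_div]
      rw [this]
      simp
      positivity
  -- cast matrix to ℚ_[2]
  set M2 : Matrix (Fin r) (Fin r) ℚ_[2] :=
    Matrix.of (fun i m : Fin r => ((M i m : ℚ) : ℚ_[2])) with hM2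
  have hdetcast : ((M.det : ℚ) : ℚ_[2]) = M2.det := by
    rw [show ((M.det : ℚ) : ℚ_[2]) = (Rat.castHom ℚ_[2]) M.det from rfl,
      RingHom.map_det]
    congr 1
  set V : ℕ := ∑ i : Fin r, (i.val + 1 + t) with hV
  have hprodb : ∏ i : Fin r, (2:ℝ) ^ (i.val + 1 + t) = 2 ^ V :=
    Finset.prod_pow_eq_pow_sum _ _ _
  have hptV : (0:ℝ) < 2 ^ V := by positivity
  -- bound on permutation products
  have hle : ∀ (σ : Equiv.Perm (Fin r)) (x : Fin r),
      ‖M2 (σ x) x‖ ≤ (2:ℝ) ^ ((σ x).val + 1 + t) := by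
    intro σ x
    by_cases hx : σ x = x
    · rw [hx]
      exact le_of_eq (hdiag x)
    · refine (hoff (σ x) x (fun h => hx h.symm)).trans ?_
      rw [← zpow_natCast (2:ℝ) ((σ x).val + 1 + t)]
      apply (zpow_le_zpow_iff_right₀ (by norm_num : (1:ℝ) < 2)).mpr
      omega
  have hbound : ∀ σ : Equiv.Perm (Fin r), σ ≠ 1 →
      ∏ x, ‖M2 (σ x) x‖ ≤ 2 ^ V / 2 := by
    intro σ hσ
    obtain ⟨j, hj⟩ : ∃ j, σ j ≠ j := by
      by_contra h
      push_neg at h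
      exact hσ (Equiv.ext fun x => (h x).trans (Equiv.Perm.one_apply x).symm)
    have hlej : ‖M2 (σ j) j‖ ≤ (2:ℝ) ^ ((σ j).val + 1 + t) / 2 := by
      refine (hoff (σ j) j (fun h => hj h.symm)).trans ?_
      rw [show (σ j).val + 1 + t = ((σ j).val + t) + 1 by omega, pow_succ,
        mul_div_assoc, div_self (by norm_num : (2:ℝ) ≠ 0), mul_one]
      rw [← zpow_natCast (2:ℝ) ((σ j).val + t)]
      apply (zpow_le_zpow_iff_right₀ (by norm_num : (1:ℝ) < 2)).mpr
      omega
    calc ∏ x, ‖M2 (σ x) x‖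
        = ‖M2 (σ j) j‖ * ∏ x ∈ Finset.univ.erase j, ‖M2 (σ x) x‖ :=
          (Finset.mul_prod_erase Finset.univ _ (Finset.mem_univ j)).symm
      _ ≤ ((2:ℝ) ^ ((σ j).val + 1 + t) / 2) *
            ∏ x ∈ Finset.univ.erase j, (2:ℝ) ^ ((σ x).val + 1 + t) := by
          apply mul_le_mul hlej
            (Finset.prod_le_prod (fun _ _ => norm_nonneg _) (fun x _ => hle σ x))
            (Finset.prod_nonneg (fun _ _ => norm_nonneg _)) (by positivity)
      _ = (∏ x, (2:ℝ) ^ ((σ x).val + 1 + t)) / 2 := by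
          rw [← Finset.mul_prod_erase Finset.univ
            (fun x => (2:ℝ) ^ ((σ x).val + 1 + t)) (Finset.mem_univ j)]
          ring
      _ = 2 ^ V / 2 := by
          rw [Equiv.prod_comp σ (fun i : Fin r => (2:ℝ) ^ (i.val + 1 + t)), hprodb]
  -- the determinant
  have hsplit : M2.det = (Equiv.Perm.sign (1 : Equiv.Perm (Fin r)) •
        ∏ x, M2 ((1 : Equiv.Perm (Fin r)) x) x) +
      ∑ σ ∈ Finset.univ.erase (1 : Equiv.Perm (Fin r)),
        Equiv.Perm.sign σ • ∏ x, M2 (σ x) x := by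
    rw [Matrix.det_apply, ← Finset.add_sum_erase Finset.univ _ (Finset.mem_univ 1)]
  have htermnorm : ∀ σ : Equiv.Perm (Fin r),
      ‖(Equiv.Perm.sign σ • ∏ x, M2 (σ x) x : ℚ_[2])‖ = ∏ x, ‖M2 (σ x) x‖ := by
    intro σ
    rcases Int.units_eq_one_or (Equiv.Perm.sign σ) with h | h <;>
      rw [h] <;> simp [norm_prod]
  have hid : ‖(Equiv.Perm.sign (1 : Equiv.Perm (Fin r)) •
      ∏ x, M2 ((1 : Equiv.Perm (Fin r)) x) x : ℚ_[2])‖ = 2 ^ V := by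
    rw [htermnorm 1]
    simp only [Equiv.Perm.one_apply]
    rw [← hprodb]
    exact Finset.prod_congr rfl fun x _ => hdiag x
  have hrest : ‖(∑ σ ∈ Finset.univ.erase (1 : Equiv.Perm (Fin r)),
      Equiv.Perm.sign σ • ∏ x, M2 (σ x) x : ℚ_[2])‖ ≤ 2 ^ V / 2 := by
    apply IsUltrametricDist.norm_sum_le_of_forall_le_of_nonneg (by positivity)
    intro σ hσ
    rw [Finset.mem_erase] at hσ
    rw [htermnorm σ]
    exact hbound σ hσ.1
  have hdetnorm : ‖M2.det‖ = 2 ^ V := by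
    rw [hsplit, padic_norm_add_eq_left (lt_of_le_of_lt hrest (by rw [hid] at *; linarith)), hid]
  have hnorm : ‖((M.det : ℚ) : ℚ_[2])‖ = 2 ^ V := by rw [hdetcast]; exact hdetnorm
  have hdet0 : M.det ≠ 0 := by
    intro h
    rw [h] at hnorm
    simp at hnorm
    exact absurd hnorm.symm (ne_of_gt hptV)
  refine ⟨hdet0, ?_⟩
  -- convert the norm to the valuation
  rw [Padic.eq_padicNorm, padicNorm.eq_zpow_of_nonzero hdet0] at hnorm
  have hnorm2 : (2:ℝ) ^ (-(padicValRat 2 M.det)) = (2:ℝ) ^ ((V:ℤ)) := by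
    push_cast at hnorm
    rw [hnorm]
    rw [zpow_natCast]
  have hval : -(padicValRat 2 M.det) = (V:ℤ) :=
    zpow_right_injective₀ (by norm_num : (0:ℝ) < 2) (by norm_num : (2:ℝ) ≠ 1) hnorm2
  -- compute V
  set S : ℕ := ∑ i ∈ range r, i with hS
  have hVsum : V = S + r * (1 + t) := by
    rw [hV, Fin.sum_univ_eq_sum_range (fun i => i + 1 + t) r]
    rw [show (fun i => i + 1 + t) = (fun i => i + (1 + t)) by funext i; omega]
    rw [Finset.sum_add_distrib, Finset.sum_const, Finset.card_range, smul_eq_mul, hS]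
  have hgauss : S * 2 = r * (r - 1) := Finset.sum_range_id_mul_two r
  have hSint : (S:ℤ) * 2 = (r:ℤ) * ((r:ℤ) - 1) := by
    have := congrArg (fun x : ℕ => (x : ℤ)) hgauss
    push_cast [Nat.cast_sub hr] at this
    linarith
  have hVint : (V:ℤ) = (S:ℤ) + (r:ℤ) * (1 + (t:ℤ)) := by
    rw [hVsum]
    push_cast
    ring
  have hq : ((r:ℤ) * ((r:ℤ)+1) / 2) * 2 = (r:ℤ) * ((r:ℤ)+1) :=
    Int.ediv_mul_cancel (Int.even_mul_succ_self (r:ℤ)).two_dvd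
  have h2 : 2 * (V:ℤ) = 2 * ((r:ℤ) * (t:ℤ) + (r:ℤ) * ((r:ℤ)+1) / 2) := by
    linear_combination 2 * hVint + hSint - hq
  have hfin : (V:ℤ) = (r:ℤ) * (t:ℤ) + (r:ℤ) * ((r:ℤ)+1) / 2 :=
    mul_left_cancel₀ (by norm_num : (2:ℤ) ≠ 0) h2
  rw [show -((r:ℤ) * t + (r:ℤ) * ((r:ℤ) + 1) / 2) = -(V:ℤ) by rw [hfin], ← hval, neg_neg]
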